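/- Consider a bijection between orientations of a constraint graph G and orientations of its subdivision H (where each edge of G is replaced by a path of connector vertices, all sub-edges carrying the original weight and connectors' constraints equal to that weight, and H-orientations are restricted to those consistent along each path). Under this bijection, the answer to the full-to-full reachability question (o_S ≡ o_T?) is the same in G and in H. -/

import Mathlib

set_option linter.unusedSectionVars false
set_option linter.unusedVariables false
set_option maxHeartbeats 1000000


def nclHead {V E : Type} (ends : E → V × V) (o : E → Bool) (e : E) : V :=
  if o e then (ends e).2 else (ends e).1

def nclValid {V E : Type} [Fintype E] [DecidableEq V] (ends : E → V × V)
    (w : E → ℕ) (c : V → ℕ) (o : E → Bool) : Prop :=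
  ∀ v : V, c v ≤ ∑ e ∈ Finset.univ.filter (fun e => nclHead ends o e = v), w e

def nclDifferOne {E : Type} (o o' : E → Bool) : Prop :=
  ∃ e₀, o e₀ ≠ o' e₀ ∧ ∀ e, e ≠ e₀ → o e = o' e

def nclMove {V E : Type} [Fintype E] [DecidableEq V] (ends : E → V × V)
    (w : E → ℕ) (c : V → ℕ) (o o' : E → Bool) : Prop :=
  nclValid ends w c o ∧ nclValid ends w c o' ∧ nclDifferOne o o'

def nclEquiv {V E : Type} [Fintype E] [DecidableEq V] (ends : E → V × V)
    (w : E → ℕ) (c : V → ℕ) (o o' : E → Bool) : Prop :=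
  Relation.ReflTransGen (nclMove ends w c) o o'

section PathSubdivision

variable {V E : Type} [Fintype E] [DecidableEq E] [DecidableEq V]

/-- In the subdivision `H` of `G` where each edge `e` is replaced by a path
through `n e` fresh connector vertices, the `j`-th node along the path of
`e` (positions `0` and `n e + 1` are the original endpoints of `e`, the
intermediate positions are the fresh connectors). -/
def pathNode (ends : E → V × V) (n : E → ℕ) (e : E) (j : Fin (n e + 2)) :
    V ⊕ (Σ e : E, Fin (n e)) :=
  if h0 : (j : ℕ) = 0 then Sum.inl (ends e).1
  else if h1 : (j : ℕ) = n e + 1 then Sum.inl (ends e).2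
  else Sum.inr ⟨e, ⟨(j : ℕ) - 1, by have := j.isLt; omega⟩⟩

/-- The endpoints of the `i`-th sub-edge of the path replacing `e`. -/
def pathEnds (ends : E → V × V) (n : E → ℕ) :
    (Σ e : E, Fin (n e + 1)) →
      (V ⊕ (Σ e : E, Fin (n e))) × (V ⊕ (Σ e : E, Fin (n e))) :=
  fun f => (pathNode ends n f.1 f.2.castSucc, pathNode ends n f.1 f.2.succ)

/-- Each sub-edge carries the weight of the original edge. -/
def pathW (w : E → ℕ) (n : E → ℕ) : (Σ e : E, Fin (n e + 1)) → ℕ :=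
  fun f => w f.1

/-- Each fresh connector vertex has constraint equal to the weight of its
edge; original vertices keep their constraints. -/
def pathC (w : E → ℕ) (c : V → ℕ) (n : E → ℕ) :
    (V ⊕ (Σ e : E, Fin (n e))) → ℕ :=
  Sum.elim c (fun s => w s.1)

/-- The bijection onto consistent orientations of `H`: an orientation `o` of
`G` orients every sub-edge of the path of `e` in the direction `o e`. -/
def pathPhi (n : E → ℕ) (o : E → Bool) : (Σ e : E, Fin (n e + 1)) → Bool :=
  fun f => o f.1

section Aux

variable (ends : E → V × V) (w : E → ℕ) (c : V → ℕ) (n : E → ℕ)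

lemma pathNode_castSucc (e : E) (i : Fin (n e + 1)) :
    pathNode ends n e i.castSucc =
      if h : (i : ℕ) = 0 then Sum.inl (ends e).1
      else Sum.inr ⟨e, ⟨(i : ℕ) - 1, by have := i.isLt; omega⟩⟩ := by
  have := i.isLt
  simp only [pathNode, Fin.coe_castSucc]
  split_ifs <;> first | rfl | omega

lemma pathNode_succ (e : E) (i : Fin (n e + 1)) :
    pathNode ends n e i.succ =
      if h : (i : ℕ) = n e then Sum.inl (ends e).2
      else Sum.inr ⟨e, ⟨(i : ℕ), by have := i.isLt; omega⟩⟩ := by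
  have := i.isLt
  simp only [pathNode, Fin.val_succ]
  split_ifs <;> first | rfl | omega | simp_all

lemma head_inl_point (O : (Σ e : E, Fin (n e + 1)) → Bool) (v : V) (e : E)
    (i : Fin (n e + 1)) :
    (if nclHead (pathEnds ends n) O ⟨e, i⟩ = Sum.inl v then w e else 0)
      = (if i = (0 : Fin (n e + 1)) then
          (if O ⟨e, 0⟩ = false ∧ (ends e).1 = v then w e else 0) else 0)
      + (if i = Fin.last (n e) then
          (if O ⟨e, Fin.last (n e)⟩ = true ∧ (ends e).2 = v then w e else 0) else 0) := by
  have hlt := i.isLt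
  cases hO : O ⟨e, i⟩ with
  | false =>
    have hd : nclHead (pathEnds ends n) O ⟨e, i⟩ = pathNode ends n e i.castSucc := by
      simp [nclHead, pathEnds, hO]
    rw [hd, pathNode_castSucc]
    by_cases h0 : (i : ℕ) = 0
    · have hi : i = 0 := Fin.ext (by simpa using h0)
      have hO0 : O ⟨e, (0 : Fin (n e + 1))⟩ = false := hi ▸ hO
      rw [dif_pos h0, if_pos hi]
      by_cases hne : n e = 0
      · have hl : i = Fin.last (n e) := Fin.ext (by simp [h0, hne])
        have hOl : O ⟨e, Fin.last (n e)⟩ = false := hl ▸ hO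
        rw [if_pos hl]
        simp [hO0, hOl]
      · have hl : ¬ (i = Fin.last (n e)) := by
          intro h; apply hne
          have := congrArg Fin.val h
          simp [Fin.val_last, h0] at this
          omega
        rw [if_neg hl]
        simp [hO0]
    · have hi : ¬ i = 0 := fun h => h0 (by simp [h])
      rw [dif_neg h0, if_neg hi]
      by_cases hl : i = Fin.last (n e)
      · have hOl : O ⟨e, Fin.last (n e)⟩ = false := hl ▸ hO
        rw [if_pos hl]; simp [hOl]
      · rw [if_neg hl]; simp
  | true =>
    have hd : nclHead (pathEnds ends n) O ⟨e, i⟩ = pathNode ends n e i.succ := by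
      simp [nclHead, pathEnds, hO]
    rw [hd, pathNode_succ]
    by_cases h0 : (i : ℕ) = n e
    · have hi : i = Fin.last (n e) := Fin.ext (by simpa [Fin.val_last] using h0)
      have hOl : O ⟨e, Fin.last (n e)⟩ = true := hi ▸ hO
      rw [dif_pos h0, if_pos hi]
      by_cases hz : i = 0
      · have hO0 : O ⟨e, (0 : Fin (n e + 1))⟩ = true := hz ▸ hO
        rw [if_pos hz]
        simp [hO0, hOl]
      · rw [if_neg hz]
        simp [hOl]
    · have hi : ¬ i = Fin.last (n e) := by
        intro h; exact h0 (by simpa [Fin.val_last] using congrArg Fin.val h)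
      rw [dif_neg h0, if_neg hi]
      by_cases hz : i = 0
      · have hO0 : O ⟨e, (0 : Fin (n e + 1))⟩ = true := hz ▸ hO
        rw [if_pos hz]
        simp [hO0]
      · rw [if_neg hz]; simp

lemma inflow_inl (O : (Σ e : E, Fin (n e + 1)) → Bool) (v : V) :
    ∑ f ∈ Finset.univ.filter
        (fun f => nclHead (pathEnds ends n) O f = Sum.inl v), pathW w n f
      = ∑ e : E, ((if O ⟨e, 0⟩ = false ∧ (ends e).1 = v then w e else 0)
          + (if O ⟨e, Fin.last (n e)⟩ = true ∧ (ends e).2 = v then w e else 0)) := by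
  rw [Finset.sum_filter, ← Finset.univ_sigma_univ, Finset.sum_sigma]
  refine Finset.sum_congr rfl fun e _ => ?_
  have : ∀ i : Fin (n e + 1),
      (if nclHead (pathEnds ends n) O ⟨e, i⟩ = Sum.inl v then pathW w n ⟨e, i⟩ else 0)
        = (if i = (0 : Fin (n e + 1)) then
            (if O ⟨e, 0⟩ = false ∧ (ends e).1 = v then w e else 0) else 0)
          + (if i = Fin.last (n e) then
            (if O ⟨e, Fin.last (n e)⟩ = true ∧ (ends e).2 = v then w e else 0) else 0) :=
    fun i => head_inl_point ends w n O v e i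
  rw [Finset.sum_congr rfl (fun i _ => this i), Finset.sum_add_distrib]
  simp [Finset.sum_ite_eq']

lemma inflowG_eq (o : E → Bool) (v : V) :
    ∑ e ∈ Finset.univ.filter (fun e => nclHead ends o e = v), w e
      = ∑ e : E, ((if o e = false ∧ (ends e).1 = v then w e else 0)
          + (if o e = true ∧ (ends e).2 = v then w e else 0)) := by
  rw [Finset.sum_filter]
  refine Finset.sum_congr rfl fun e _ => ?_
  unfold nclHead
  cases ho : o e <;> simp [ho]

lemma head_inr_point (O : (Σ e : E, Fin (n e + 1)) → Bool) (e : E) (i : Fin (n e))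
    (f : Σ e : E, Fin (n e + 1)) :
    (if nclHead (pathEnds ends n) O f = Sum.inr ⟨e, i⟩ then pathW w n f else 0)
      = (if f = ⟨e, i.castSucc⟩ then
          (if O ⟨e, i.castSucc⟩ = true then w e else 0) else 0)
      + (if f = ⟨e, i.succ⟩ then
          (if O ⟨e, i.succ⟩ = false then w e else 0) else 0) := by
  obtain ⟨e', k⟩ := f
  by_cases he : e' = e
  · subst he
    have hlt := k.isLt
    have hilt := i.isLt
    have hsig : ∀ j j' : Fin (n e' + 1),
        ((⟨e', j⟩ : Σ e : E, Fin (n e + 1)) = ⟨e', j'⟩) ↔ j = j' := by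
      intro j j'
      constructor
      · intro h; exact eq_of_heq (Sigma.mk.inj_iff.mp h).2
      · rintro rfl; rfl
    have hsig2 : ∀ j j' : Fin (n e'),
        ((⟨e', j⟩ : Σ e : E, Fin (n e)) = ⟨e', j'⟩) ↔ j = j' := by
      intro j j'
      constructor
      · intro h; exact eq_of_heq (Sigma.mk.inj_iff.mp h).2
      · rintro rfl; rfl
    have hc1 : ((⟨e', k⟩ : Σ e : E, Fin (n e + 1)) = ⟨e', i.castSucc⟩) ↔ (k : ℕ) = (i : ℕ) := by
      rw [hsig, Fin.ext_iff]; rfl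
    have hc2 : ((⟨e', k⟩ : Σ e : E, Fin (n e + 1)) = ⟨e', i.succ⟩) ↔ (k : ℕ) = (i : ℕ) + 1 := by
      rw [hsig, Fin.ext_iff]; rfl
    cases hO : O ⟨e', k⟩ with
    | false =>
      have hd : nclHead (pathEnds ends n) O ⟨e', k⟩ = pathNode ends n e' k.castSucc := by
        simp [nclHead, pathEnds, hO]
      rw [hd, pathNode_castSucc]
      by_cases h0 : (k : ℕ) = 0
      · rw [dif_pos h0]
        have t1 : ¬ ((⟨e', k⟩ : Σ e : E, Fin (n e + 1)) = ⟨e', i.castSucc⟩) ∨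
            (O ⟨e', i.castSucc⟩ = true) = False := by
          by_cases hk : (k : ℕ) = (i : ℕ)
          · right
            have : i.castSucc = k := Fin.ext (by simpa using hk.symm)
            rw [this, hO]; simp
          · left; rw [hc1]; exact hk
        have t2 : ¬ ((⟨e', k⟩ : Σ e : E, Fin (n e + 1)) = ⟨e', i.succ⟩) := by
          rw [hc2]; omega
        rcases t1 with t1 | t1
        · rw [if_neg t1, if_neg t2]; simp
        · simp [t1, t2]
      · rw [dif_neg h0]
        simp only [Sum.inr.injEq, hsig2, hc1, hc2, Fin.ext_iff]
        by_cases hk : (k : ℕ) = (i : ℕ) + 1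
        · have hsk : i.succ = k := Fin.ext (by simpa [Fin.val_succ] using hk.symm)
          rw [hsk, hO]
          have hlhs : ((⟨(k : ℕ) - 1, by omega⟩ : Fin (n e')) : ℕ) = (i : ℕ) := by
            show (k : ℕ) - 1 = (i : ℕ); omega
          rw [if_pos hlhs, if_pos hk]
          have : ¬ (k : ℕ) = (i : ℕ) := by omega
          rw [if_neg this]
          simp [pathW]
        · have hlhs : ¬ (((⟨(k : ℕ) - 1, by omega⟩ : Fin (n e')) : ℕ) = (i : ℕ)) := by
            show ¬ ((k : ℕ) - 1 = (i : ℕ)); omega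
          rw [if_neg hlhs, if_neg hk]
          by_cases hk2 : (k : ℕ) = (i : ℕ)
          · have hck : i.castSucc = k := Fin.ext (by simpa using hk2.symm)
            rw [if_pos hk2, hck, hO]
            simp
          · rw [if_neg hk2]
    | true =>
      have hd : nclHead (pathEnds ends n) O ⟨e', k⟩ = pathNode ends n e' k.succ := by
        simp [nclHead, pathEnds, hO]
      rw [hd, pathNode_succ]
      by_cases h0 : (k : ℕ) = n e'
      · rw [dif_pos h0]
        have t2 : ¬ ((⟨e', k⟩ : Σ e : E, Fin (n e + 1)) = ⟨e', i.succ⟩) ∨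
            (O ⟨e', i.succ⟩ = false) = False := by
          by_cases hk : (k : ℕ) = (i : ℕ) + 1
          · right
            have : i.succ = k := Fin.ext (by simpa [Fin.val_succ] using hk.symm)
            rw [this, hO]; simp
          · left; rw [hc2]; exact hk
        have t1 : ¬ ((⟨e', k⟩ : Σ e : E, Fin (n e + 1)) = ⟨e', i.castSucc⟩) := by
          rw [hc1]; omega
        rcases t2 with t2 | t2
        · rw [if_neg t1, if_neg t2]; simp
        · simp [t1, t2]
      · rw [dif_neg h0]
        simp only [Sum.inr.injEq, hsig2, hc1, hc2, Fin.ext_iff]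
        by_cases hk : (k : ℕ) = (i : ℕ)
        · have hck : i.castSucc = k := Fin.ext (by simpa using hk.symm)
          rw [hck, hO]
          have hlhs : ((⟨(k : ℕ), by omega⟩ : Fin (n e')) : ℕ) = (i : ℕ) := by
            simpa using hk
          rw [if_pos hlhs, if_pos hk]
          have : ¬ (k : ℕ) = (i : ℕ) + 1 := by omega
          rw [if_neg this]
          simp [pathW]
        · have hlhs : ¬ (((⟨(k : ℕ), by omega⟩ : Fin (n e')) : ℕ) = (i : ℕ)) := by
            simpa using hk
          rw [if_neg hlhs, if_neg hk]
          by_cases hk2 : (k : ℕ) = (i : ℕ) + 1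
          · have hsk : i.succ = k := Fin.ext (by simpa [Fin.val_succ] using hk2.symm)
            rw [if_pos hk2, hsk, hO]
            simp
          · rw [if_neg hk2]
  · have t1 : ¬ ((⟨e', k⟩ : Σ e : E, Fin (n e + 1)) = ⟨e, i.castSucc⟩) :=
      fun h => he (Sigma.mk.inj_iff.mp h).1
    have t2 : ¬ ((⟨e', k⟩ : Σ e : E, Fin (n e + 1)) = ⟨e, i.succ⟩) :=
      fun h => he (Sigma.mk.inj_iff.mp h).1
    have t3 : ¬ (nclHead (pathEnds ends n) O ⟨e', k⟩ = Sum.inr ⟨e, i⟩) := by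
      cases hO : O ⟨e', k⟩ with
      | false =>
        have hd : nclHead (pathEnds ends n) O ⟨e', k⟩ = pathNode ends n e' k.castSucc := by
          simp [nclHead, pathEnds, hO]
        rw [hd, pathNode_castSucc]
        split_ifs <;> simp [Sigma.mk.inj_iff, he]
      | true =>
        have hd : nclHead (pathEnds ends n) O ⟨e', k⟩ = pathNode ends n e' k.succ := by
          simp [nclHead, pathEnds, hO]
        rw [hd, pathNode_succ]
        split_ifs <;> simp [Sigma.mk.inj_iff, he]
    rw [if_neg t1, if_neg t2, if_neg t3]

lemma inflow_inr (O : (Σ e : E, Fin (n e + 1)) → Bool) (e : E) (i : Fin (n e)) :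
    ∑ f ∈ Finset.univ.filter
        (fun f => nclHead (pathEnds ends n) O f = Sum.inr ⟨e, i⟩), pathW w n f
      = (if O ⟨e, i.castSucc⟩ = true then w e else 0)
        + (if O ⟨e, i.succ⟩ = false then w e else 0) := by
  rw [Finset.sum_filter,
    Finset.sum_congr rfl (fun f _ => head_inr_point ends w n O e i f),
    Finset.sum_add_distrib]
  simp [Finset.sum_ite_eq']

lemma nclValid_step (O : (Σ e : E, Fin (n e + 1)) → Bool)
    (hO : nclValid (pathEnds ends n) (pathW w n) (pathC w c n) O)
    (e : E) (i : Fin (n e)) (h : O ⟨e, i.succ⟩ = true) :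
    O ⟨e, i.castSucc⟩ = true ∨ w e = 0 := by
  cases hc : O ⟨e, i.castSucc⟩ with
  | true => exact Or.inl rfl
  | false =>
    right
    have hv := hO (Sum.inr ⟨e, i⟩)
    rw [inflow_inr] at hv
    have hC : pathC w c n (Sum.inr ⟨e, i⟩) = w e := rfl
    rw [hC, hc, h] at hv
    simpa using hv

lemma nclValid_mono (O : (Σ e : E, Fin (n e + 1)) → Bool)
    (hO : nclValid (pathEnds ends n) (pathW w n) (pathC w c n) O)
    (e : E) (h : O ⟨e, Fin.last (n e)⟩ = true) :
    O ⟨e, (0 : Fin (n e + 1))⟩ = true ∨ w e = 0 := by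
  have key : ∀ m : ℕ, ∀ hm : m < n e + 1, O ⟨e, ⟨m, hm⟩⟩ = true →
      O ⟨e, (0 : Fin (n e + 1))⟩ = true ∨ w e = 0 := by
    intro m
    induction m with
    | zero =>
      intro hm h0
      left
      have he0 : (⟨0, hm⟩ : Fin (n e + 1)) = 0 := Fin.ext (by simp)
      exact he0 ▸ h0
    | succ m ih =>
      intro hm hsucc
      have hm' : m < n e := by omega
      have hsc : (Fin.succ ⟨m, hm'⟩ : Fin (n e + 1)) = ⟨m + 1, hm⟩ := rfl
      rcases nclValid_step ends w c n O hO e ⟨m, hm'⟩ (by rw [hsc]; exact hsucc) with h' | h'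
      · have hcs : (Fin.castSucc ⟨m, hm'⟩ : Fin (n e + 1)) = ⟨m, by omega⟩ := rfl
        exact ih (by omega) (by rw [hcs] at h'; exact h')
      · exact Or.inr h'
  exact key (n e) (Nat.lt_succ_self _) h

/-- projection back to `G` : take the orientation of the last sub-edge. -/
def psi (O : (Σ e : E, Fin (n e + 1)) → Bool) : E → Bool :=
  fun e => O ⟨e, Fin.last (n e)⟩

lemma psi_valid (O : (Σ e : E, Fin (n e + 1)) → Bool)
    (hO : nclValid (pathEnds ends n) (pathW w n) (pathC w c n) O) :
    nclValid ends w c (psi n O) := by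
  intro v
  have h1 := hO (Sum.inl v)
  rw [inflow_inl] at h1
  have h2 : pathC w c n (Sum.inl v) = c v := rfl
  rw [h2] at h1
  rw [inflowG_eq]
  refine le_trans h1 (Finset.sum_le_sum fun e _ => ?_)
  have hpsi : psi n O e = O ⟨e, Fin.last (n e)⟩ := rfl
  refine Nat.add_le_add ?_ (le_of_eq (by rw [hpsi]))
  by_cases ha : O ⟨e, 0⟩ = false ∧ (ends e).1 = v
  · rw [if_pos ha]
    by_cases hb : psi n O e = false ∧ (ends e).1 = v
    · rw [if_pos hb]
    · rw [if_neg hb]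
      have hlast : O ⟨e, Fin.last (n e)⟩ = true := by
        rcases Bool.eq_false_or_eq_true (O ⟨e, Fin.last (n e)⟩) with h | h
        · exact h
        · exact absurd ⟨h, ha.2⟩ hb
      rcases nclValid_mono ends w c n O hO e hlast with h | h
      · rw [ha.1] at h; exact absurd h (by simp)
      · omega
  · rw [if_neg ha]; exact Nat.zero_le _

lemma phi_valid (o : E → Bool) (ho : nclValid ends w c o) :
    nclValid (pathEnds ends n) (pathW w n) (pathC w c n) (pathPhi n o) := by
  intro v
  cases v with
  | inl v =>
    have h1 := ho v
    rw [inflowG_eq] at h1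
    rw [inflow_inl]
    exact h1
  | inr s =>
    obtain ⟨e, i⟩ := s
    rw [inflow_inr]
    show w e ≤ _
    have h1 : pathPhi n o ⟨e, i.castSucc⟩ = o e := rfl
    have h2 : pathPhi n o ⟨e, i.succ⟩ = o e := rfl
    rw [h1, h2]
    cases ho' : o e <;> simp

lemma move_psi (O O' : (Σ e : E, Fin (n e + 1)) → Bool)
    (h : nclMove (pathEnds ends n) (pathW w n) (pathC w c n) O O') :
    Relation.ReflTransGen (nclMove ends w c) (psi n O) (psi n O') := by
  obtain ⟨hv, hv', f₀, hne, hrest⟩ := h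
  obtain ⟨e₁, i₁⟩ := f₀
  by_cases hl : i₁ = Fin.last (n e₁)
  · subst hl
    refine Relation.ReflTransGen.single
      ⟨psi_valid ends w c n O hv, psi_valid ends w c n O' hv', e₁, hne, ?_⟩
    intro e he
    exact hrest ⟨e, Fin.last (n e)⟩ (fun hcon => he (Sigma.mk.inj_iff.mp hcon).1)
  · have heq : psi n O = psi n O' := by
      funext e
      by_cases he : e = e₁
      · subst he
        exact hrest ⟨e, Fin.last (n e)⟩
          (fun hcon => hl (eq_of_heq (Sigma.mk.inj_iff.mp hcon).2).symm)
      · exact hrest ⟨e, Fin.last (n e)⟩ (fun hcon => he (Sigma.mk.inj_iff.mp hcon).1)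
    rw [heq]

/-- intermediate orientations when sweeping the path of `e₀`. -/
def liftO (o : E → Bool) (e₀ : E) (k : ℕ) : (Σ e : E, Fin (n e + 1)) → Bool :=
  fun f => if f.1 = e₀ then decide ((f.2 : ℕ) < k) else o f.1

lemma liftO_valid (hloop : ∀ e : E, (ends e).1 ≠ (ends e).2)
    (o o' : E → Bool) (e₀ : E) (ho : nclValid ends w c o)
    (ho' : nclValid ends w c o') (h₀ : o e₀ = true) (h₀' : o' e₀ = false)
    (hagree : ∀ e, e ≠ e₀ → o e = o' e) (k : ℕ) :
    nclValid (pathEnds ends n) (pathW w n) (pathC w c n) (liftO n o e₀ k) := by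
  intro v
  cases v with
  | inl v =>
    show c v ≤ _
    rw [inflow_inl]
    have base : ∀ oc : E → Bool, nclValid ends w c oc → (∀ e, e ≠ e₀ → oc e = o e) →
        ((if liftO n o e₀ k ⟨e₀, 0⟩ = false ∧ (ends e₀).1 = v then w e₀ else 0)
          + (if liftO n o e₀ k ⟨e₀, Fin.last (n e₀)⟩ = true ∧ (ends e₀).2 = v then w e₀ else 0)
          = (if oc e₀ = false ∧ (ends e₀).1 = v then w e₀ else 0)
          + (if oc e₀ = true ∧ (ends e₀).2 = v then w e₀ else 0)) →
        c v ≤ ∑ e : E, ((if liftO n o e₀ k ⟨e, 0⟩ = false ∧ (ends e).1 = v then w e else 0)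
          + (if liftO n o e₀ k ⟨e, Fin.last (n e)⟩ = true ∧ (ends e).2 = v then w e else 0)) := by
      intro oc hvc hocagree heq
      have hle := hvc v
      rw [inflowG_eq] at hle
      refine le_trans hle (le_of_eq ?_)
      refine Finset.sum_congr rfl fun e _ => ?_
      by_cases he : e = e₀
      · subst he; exact heq.symm
      · have h1 : liftO n o e₀ k ⟨e, 0⟩ = oc e := by
          simp [liftO, he, hocagree e he]
        have h2 : liftO n o e₀ k ⟨e, Fin.last (n e)⟩ = oc e := by
          simp [liftO, he, hocagree e he]
        rw [h1, h2]
    have hv0 : liftO n o e₀ k ⟨e₀, 0⟩ = decide (0 < k) := by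
      simp [liftO]
      exact decide_eq_decide.mpr (by simp)
    have hvl : liftO n o e₀ k ⟨e₀, Fin.last (n e₀)⟩ = decide (n e₀ < k) := by
      simp [liftO]
    rcases Nat.eq_zero_or_pos k with hk0 | hkpos
    · refine base o' ho' (fun e he => (hagree e he).symm) ?_
      subst hk0
      rw [hv0, hvl]
      simp [h₀']
    · by_cases hkl : n e₀ < k
      · refine base o ho (fun e he => rfl) ?_
        rw [hv0, hvl]
        simp [h₀, hkpos, hkl]
      · have hd0 : decide (0 < k) = true := by simpa using hkpos
        have hdl : decide (n e₀ < k) = false := by simpa using hkl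
        by_cases hvv : (ends e₀).2 = v
        · refine base o' ho' (fun e he => (hagree e he).symm) ?_
          rw [hv0, hvl, hd0, hdl]
          have h1v : ¬ (ends e₀).1 = v := fun h => hloop e₀ (h.trans hvv.symm)
          simp [h₀', h1v]
        · refine base o ho (fun e he => rfl) ?_
          rw [hv0, hvl, hd0, hdl]
          simp [h₀, hvv]
  | inr s =>
    obtain ⟨e, i⟩ := s
    rw [inflow_inr]
    show w e ≤ _
    by_cases he : e = e₀
    · subst he
      have hcs : liftO n o e k ⟨e, i.castSucc⟩ = decide ((i : ℕ) < k) := by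
        simp [liftO]
      have hsc : liftO n o e k ⟨e, i.succ⟩ = decide ((i : ℕ) + 1 < k) := by
        simp [liftO]
      rw [hcs, hsc]
      by_cases h2 : (i : ℕ) + 1 < k
      · have h1 : (i : ℕ) < k := by omega
        simp [h1, h2]
      · simp [h2]
    · have h1 : liftO n o e₀ k ⟨e, i.castSucc⟩ = o e := by simp [liftO, he]
      have h2 : liftO n o e₀ k ⟨e, i.succ⟩ = o e := by simp [liftO, he]
      rw [h1, h2]
      cases ho'' : o e <;> simp

lemma liftO_move (hloop : ∀ e : E, (ends e).1 ≠ (ends e).2)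
    (o o' : E → Bool) (e₀ : E) (ho : nclValid ends w c o)
    (ho' : nclValid ends w c o') (h₀ : o e₀ = true) (h₀' : o' e₀ = false)
    (hagree : ∀ e, e ≠ e₀ → o e = o' e) (k : ℕ) (hk : k < n e₀ + 1) :
    nclMove (pathEnds ends n) (pathW w n) (pathC w c n)
      (liftO n o e₀ (k + 1)) (liftO n o e₀ k) := by
  refine ⟨liftO_valid ends w c n hloop o o' e₀ ho ho' h₀ h₀' hagree (k + 1),
    liftO_valid ends w c n hloop o o' e₀ ho ho' h₀ h₀' hagree k,
    ⟨e₀, ⟨k, hk⟩⟩, ?_, ?_⟩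
  · simp [liftO]
  · rintro ⟨e, j⟩ hf
    by_cases he : e = e₀
    · subst he
      have hj : (j : ℕ) ≠ k := by
        intro h
        exact hf (by subst h; rfl)
      simp only [liftO]
      rw [if_pos trivial, if_pos trivial, decide_eq_decide]
      omega
    · simp [liftO, he]

lemma liftO_equiv (hloop : ∀ e : E, (ends e).1 ≠ (ends e).2)
    (o o' : E → Bool) (e₀ : E) (ho : nclValid ends w c o)
    (ho' : nclValid ends w c o') (h₀ : o e₀ = true) (h₀' : o' e₀ = false)
    (hagree : ∀ e, e ≠ e₀ → o e = o' e) :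
    Relation.ReflTransGen (nclMove (pathEnds ends n) (pathW w n) (pathC w c n))
      (pathPhi n o) (pathPhi n o') := by
  have hA : pathPhi n o = liftO n o e₀ (n e₀ + 1) := by
    funext f
    obtain ⟨e, j⟩ := f
    by_cases he : e = e₀
    · subst he
      have hj : (j : ℕ) < n e + 1 := j.isLt
      simp [pathPhi, liftO, h₀, hj]
    · simp [pathPhi, liftO, he]
  have hB : pathPhi n o' = liftO n o e₀ 0 := by
    funext f
    obtain ⟨e, j⟩ := f
    by_cases he : e = e₀
    · subst he
      simp [pathPhi, liftO, h₀']
    · simp [pathPhi, liftO, he, (hagree e he).symm]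
  rw [hA, hB]
  have key : ∀ k, k ≤ n e₀ + 1 →
      Relation.ReflTransGen (nclMove (pathEnds ends n) (pathW w n) (pathC w c n))
        (liftO n o e₀ k) (liftO n o e₀ 0) := by
    intro k
    induction k with
    | zero => intro _; exact Relation.ReflTransGen.refl
    | succ m ih =>
      intro hm
      exact Relation.ReflTransGen.head
        (liftO_move ends w c n hloop o o' e₀ ho ho' h₀ h₀' hagree m (by omega))
        (ih (by omega))
  exact key (n e₀ + 1) le_rfl

end Aux

lemma nclEquiv_symm {W F : Type} [Fintype F] [DecidableEq W] (ends' : F → W × W)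
    (w' : F → ℕ) (c' : W → ℕ) {a b : F → Bool}
    (h : Relation.ReflTransGen (nclMove ends' w' c') a b) :
    Relation.ReflTransGen (nclMove ends' w' c') b a := by
  induction h with
  | refl => exact Relation.ReflTransGen.refl
  | tail _ hstep ih =>
    obtain ⟨h1, h2, e₀, hne, hr⟩ := hstep
    exact Relation.ReflTransGen.head ⟨h2, h1, e₀, hne.symm, fun e he => (hr e he).symm⟩ ih


/-- Under the bijection between orientations of `G` and consistent
orientations of its subdivision `H`, the answer to the full-to-full
reachability question is the same in `G` and in `H`. -/
theorem ncl_path_subdivision_full_to_full (ends : E → V × V) (w : E → ℕ)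
    (c : V → ℕ) (n : E → ℕ) (hloop : ∀ e : E, (ends e).1 ≠ (ends e).2)
    (oS oT : E → Bool) (hS : nclValid ends w c oS) (hT : nclValid ends w c oT) :
    nclEquiv ends w c oS oT ↔
      nclEquiv (pathEnds ends n) (pathW w n) (pathC w c n)
        (pathPhi n oS) (pathPhi n oT) := by
  clear hS hT
  constructor
  · intro h
    unfold nclEquiv at h ⊢
    induction h with
    | refl => exact Relation.ReflTransGen.refl
    | @tail o1 o2 hh hstep ih =>
      obtain ⟨hv1, hv2, e₀, hne, hr⟩ := hstep
      refine ih.trans ?_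
      cases h1 : o1 e₀ with
      | true =>
        have h2 : o2 e₀ = false := by
          cases h2 : o2 e₀
          · rfl
          · exact absurd (h1.trans h2.symm) hne
        exact liftO_equiv ends w c n hloop o1 o2 e₀ hv1 hv2 h1 h2 hr
      | false =>
        have h2 : o2 e₀ = true := by
          cases h2 : o2 e₀
          · exact absurd (h1.trans h2.symm) hne
          · rfl
        exact nclEquiv_symm _ _ _
          (liftO_equiv ends w c n hloop o2 o1 e₀ hv2 hv1 h2 h1
            (fun e he => (hr e he).symm))
  · intro h
    unfold nclEquiv at h ⊢
    have key : ∀ A B : (Σ e : E, Fin (n e + 1)) → Bool,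
        Relation.ReflTransGen (nclMove (pathEnds ends n) (pathW w n) (pathC w c n)) A B →
        Relation.ReflTransGen (nclMove ends w c) (psi n A) (psi n B) := by
      intro A B hAB
      induction hAB with
      | refl => exact Relation.ReflTransGen.refl
      | tail _ hstep ih => exact ih.trans (move_psi ends w c n _ _ hstep)
    exact key _ _ h

end PathSubdivision
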